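/- Universal O(1/T) convergence of Bregman-surrogate algorithms: for f, ψ directionally differentiable, β^{(t+1)} ∈ argmin_β [f(β) + Δ_ψ(β,β^{(t)})], the running average satisfies avg_{0≤t≤T} (2 Δ̄_ψ + Δ_f)(β^{(t)}, β^{(t+1)}) ≤ (f(β^{(0)}) − f(β^{(T+1)}))/(T+1) for all T ≥ 1, where Δ̄_ψ(β,γ) = (Δ_ψ(β,γ) + Δ_ψ(γ,β))/2 is the symmetrized GBF. -/

import Mathlib

open Filter Topology Set

noncomputable section

def HasDirDeriv {E : Type*} [AddCommGroup E] [Module ℝ E] (ψ : E → ℝ) (β h : E) (d : ℝ) : Prop :=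
  Tendsto (fun ε : ℝ => (ψ (β + ε • h) - ψ β) / ε) (𝓝[>] (0:ℝ)) (𝓝 d)

def GBF {E : Type*} [AddCommGroup E] [Module ℝ E] (ψ : E → ℝ) (δ : E → E → ℝ) (β γ : E) : ℝ :=
  ψ β - ψ γ - δ γ (β - γ)

lemma dir_smul {E : Type*} [AddCommGroup E] [Module ℝ E] (ψ : E → ℝ) (β h : E) (d c : ℝ)
    (hc : 0 < c) (hd : HasDirDeriv ψ β h d) : HasDirDeriv ψ β (c • h) (c * d) := by
  have hmap : Tendsto (fun ε : ℝ => c * ε) (𝓝[>] (0:ℝ)) (𝓝[>] (0:ℝ)) := by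
    apply tendsto_nhdsWithin_of_tendsto_nhds_of_eventually_within
    · have h2 : Tendsto (fun ε : ℝ => c * ε) (𝓝 0) (𝓝 (c * 0)) :=
        (continuous_const.mul continuous_id).tendsto 0
      simpa using h2.mono_left nhdsWithin_le_nhds
    · filter_upwards [self_mem_nhdsWithin] with ε hε
      exact mul_pos hc hε
  have h1 := (hd.comp hmap).const_mul c
  refine Tendsto.congr' ?_ (by simpa [mul_comm] using h1)
  filter_upwards [self_mem_nhdsWithin] with ε hε
  have hε' : (ε:ℝ) ≠ 0 := ne_of_gt hε
  have hc' : c ≠ 0 := ne_of_gt hc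
  show c * ((ψ (β + (c * ε) • h) - ψ β) / (c * ε)) = (ψ (β + ε • (c • h)) - ψ β) / ε
  rw [smul_smul, mul_comm ε c]
  field_simp

lemma dir_unique {E : Type*} [AddCommGroup E] [Module ℝ E] (ψ : E → ℝ) (β h : E) (d d' : ℝ)
    (h1 : HasDirDeriv ψ β h d) (h2 : HasDirDeriv ψ β h d') : d = d' :=
  tendsto_nhds_unique h1 h2

theorem bregman_surrogate_rate {p : ℕ} (f ψ : (Fin p → ℝ) → ℝ)
    (δf δψ : (Fin p → ℝ) → (Fin p → ℝ) → ℝ)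
    (hf : ∀ β h, HasDirDeriv f β h (δf β h))
    (hψ : ∀ β h, HasDirDeriv ψ β h (δψ β h))
    (β : ℕ → (Fin p → ℝ))
    (hmin : ∀ t : ℕ, ∀ x : Fin p → ℝ,
      f (β (t+1)) + GBF ψ δψ (β (t+1)) (β t) ≤ f x + GBF ψ δψ x (β t)) :
    ∀ T : ℕ, 1 ≤ T →
      (∑ t ∈ Finset.range (T+1),
        (2 * ((GBF ψ δψ (β t) (β (t+1)) + GBF ψ δψ (β (t+1)) (β t)) / 2)
          + GBF f δf (β t) (β (t+1)))) / ((T : ℝ) + 1)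
      ≤ (f (β 0) - f (β (T+1))) / ((T : ℝ) + 1) := by
  -- per-step bound
  have key : ∀ t : ℕ,
      2 * ((GBF ψ δψ (β t) (β (t+1)) + GBF ψ δψ (β (t+1)) (β t)) / 2)
        + GBF f δf (β t) (β (t+1)) ≤ f (β t) - f (β (t+1)) := by
    intro t
    set a := β (t+1)
    set b := β t
    set d := b - a with hd_def
    -- L := δf a d + δψ a d + δψ b (-d) ≥ 0
    have hL : 0 ≤ δf a d + δψ a d + δψ b (-d) := by
      have htend : Tendsto (fun ε : ℝ =>
          (f (a + ε • d) - f a) / ε + (ψ (a + ε • d) - ψ a) / ε + δψ b (-d))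
          (𝓝[>] (0:ℝ)) (𝓝 (δf a d + δψ a d + δψ b (-d))) :=
        ((hf a d).add (hψ a d)).add_const _
      refine ge_of_tendsto htend ?_
      have hIoo : Ioo (0:ℝ) 1 ∈ 𝓝[>] (0:ℝ) := Ioo_mem_nhdsGT_of_mem (by simp)
      filter_upwards [hIoo] with ε hε
      obtain ⟨hε0, hε1⟩ := hε
      -- homogeneity: δψ b ((1-ε) • (-d)) = (1-ε) * δψ b (-d)
      have hhom : δψ b ((1-ε) • (-d)) = (1-ε) * δψ b (-d) :=
        dir_unique ψ b _ _ _ (hψ b _) (dir_smul ψ b (-d) _ (1-ε) (by linarith) (hψ b (-d)))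
      have hm := hmin t (a + ε • d)
      simp only [GBF] at hm
      have harg : a + ε • d - b = (1-ε) • (-d) := by
        rw [hd_def]; module
      have harg2 : a - b = -d := by rw [hd_def]; abel
      rw [harg, harg2, hhom] at hm
      -- hm : f a + (ψ a - ψ b - δψ b (-d)) ≤ f (a+εd) + (ψ(a+εd) - ψ b - (1-ε)*δψ b (-d))
      have h0 : 0 ≤ (f (a + ε • d) - f a) + (ψ (a + ε • d) - ψ a) + ε * δψ b (-d) := by
        nlinarith [hm]
      have hdiv := div_nonneg h0 (le_of_lt hε0)
      have hεne : ε ≠ 0 := ne_of_gt hε0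
      have heq : (f (a + ε • d) - f a) / ε + (ψ (a + ε • d) - ψ a) / ε + δψ b (-d)
          = (f (a + ε • d) - f a + (ψ (a + ε • d) - ψ a) + ε * δψ b (-d)) / ε := by
        field_simp
      rw [heq]
      exact hdiv
    -- expand GBFs
    simp only [GBF]
    have harg2 : a - b = -d := by rw [hd_def]; abel
    have harg3 : b - a = d := by rw [hd_def]
    rw [harg2, harg3]
    linarith
  intro T hT
  have hTpos : (0:ℝ) < (T:ℝ) + 1 := by positivity
  have hsum : (∑ t ∈ Finset.range (T+1),
      (2 * ((GBF ψ δψ (β t) (β (t+1)) + GBF ψ δψ (β (t+1)) (β t)) / 2)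
        + GBF f δf (β t) (β (t+1))))
      ≤ ∑ t ∈ Finset.range (T+1), (f (β t) - f (β (t+1))) :=
    Finset.sum_le_sum fun t _ => key t
  have htel : ∑ t ∈ Finset.range (T+1), (f (β t) - f (β (t+1)))
      = f (β 0) - f (β (T+1)) := Finset.sum_range_sub' (fun t => f (β t)) (T+1)
  have := hsum.trans_eq htel
  gcongr
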